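/- Fix d ≥ 1, σ > 0, γ > 0 and a unit vector u ∈ ℝ^d. Then the function s ↦ R(s·u) is continuous on (0, ∞), where R(μ) is the normalized uniform surface measure of {(p, t) ∈ S^d : p ≠ 0, E_{μ,σ}(p, t) ≤ γ}. -/

import Mathlib

open Classical MeasureTheory ProbabilityTheory

/-- `Φ`, the standard Gaussian cumulative distribution function. -/
noncomputable def Phi (x : ℝ) : ℝ := ((gaussianReal 0 1) (Set.Iic x)).toReal

/-- Euclidean dot product on `ℝ^d`. -/
noncomputable def dotp {d : ℕ} (a b : Fin d → ℝ) : ℝ := ∑ i, a i * b i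

/-- Euclidean norm of a vector in `ℝ^d`. -/
noncomputable def eucNorm {d : ℕ} (x : Fin d → ℝ) : ℝ := Real.sqrt (∑ i, (x i) ^ 2)

/-- `E_{μ,σ}(p, t)`: reducible error of the affine classifier with parameters `(p, t)` for
the antipodal equal-prior mixture of `N_d(−μ, σ²I)` and `N_d(μ, σ²I)`. -/
noncomputable def redErrMD (d : ℕ) (μ : Fin d → ℝ) (σ : ℝ) (p : Fin d → ℝ) (t : ℝ) : ℝ :=
  Phi (eucNorm μ / σ) - (1 / 2) * Phi ((|dotp p μ| - t) / (σ * eucNorm p))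
    - (1 / 2) * Phi ((t + |dotp p μ|) / (σ * eucNorm p))

/-- The (non-normalized) uniform surface measure on the unit sphere
`S^d ⊂ ℝ^{d+1}`. -/
noncomputable def sphereMeasure (d : ℕ) :
    Measure (Metric.sphere (0 : EuclideanSpace ℝ (Fin (d + 1))) 1) :=
  (volume : Measure (EuclideanSpace ℝ (Fin (d + 1)))).toSphere

/-- First `d` coordinates `p` of a point of `ℝ^{d+1}`. -/
noncomputable def pPart (d : ℕ) (x : EuclideanSpace ℝ (Fin (d + 1))) : Fin d → ℝ :=
  fun i => x i.castSucc

/-- Last coordinate `t` of a point of `ℝ^{d+1}`. -/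
noncomputable def tPart (d : ℕ) (x : EuclideanSpace ℝ (Fin (d + 1))) : ℝ :=
  x (Fin.last d)

/-- The multidimensional Rashomon ratio `R(μ)`: the normalized uniform surface measure of
`{(p, t) ∈ S^d : p ≠ 0, E_{μ,σ}(p, t) ≤ γ}`. -/
noncomputable def rashRatioMD (d : ℕ) (σ γ : ℝ) (μ : Fin d → ℝ) : ℝ :=
  (sphereMeasure d {x | pPart d x.val ≠ 0 ∧
      redErrMD d μ σ (pPart d x.val) (tPart d x.val) ≤ γ}).toReal
    / (sphereMeasure d Set.univ).toReal


noncomputable def stdPdf : ℝ → ℝ := gaussianPDFReal 0 1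

lemma stdPdf_continuous : Continuous stdPdf := by
  unfold stdPdf gaussianPDFReal
  fun_prop

lemma stdPdf_pos (x : ℝ) : 0 < stdPdf x := gaussianPDFReal_pos 0 1 x one_ne_zero

lemma stdPdf_lt {x y : ℝ} (h : y ^ 2 < x ^ 2) : stdPdf x < stdPdf y := by
  unfold stdPdf gaussianPDFReal
  have hc : (0:ℝ) < (Real.sqrt (2 * Real.pi * (1:NNReal)))⁻¹ := by
    rw [inv_pos]
    apply Real.sqrt_pos.2
    positivity
  apply mul_lt_mul_of_pos_left _ hc
  apply Real.exp_lt_exp.2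
  have h2 : (0:ℝ) < 2 * ((1:NNReal):ℝ) := by norm_num
  rw [div_lt_div_iff_of_pos_right h2]
  simp only [sub_zero, neg_lt_neg_iff]
  exact h

lemma Phi_eq_integral (x : ℝ) : Phi x = ∫ t in Set.Iic x, stdPdf t := by
  rw [Phi, gaussianReal_of_var_ne_zero 0 one_ne_zero,
    withDensity_apply _ measurableSet_Iic]
  rw [integral_eq_lintegral_of_nonneg_ae (ae_of_all _ fun t => (stdPdf_pos t).le)
    (stdPdf_continuous.aestronglyMeasurable.restrict)]
  rfl

lemma stdPdf_integrableOn (s : Set ℝ) : IntegrableOn stdPdf s :=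
  (integrable_gaussianPDFReal 0 1).integrableOn

lemma Phi_eq (x : ℝ) : Phi x = Phi 0 + ∫ t in (0:ℝ)..x, stdPdf t := by
  rw [Phi_eq_integral, Phi_eq_integral,
    ← intervalIntegral.integral_Iic_sub_Iic (stdPdf_integrableOn _) (stdPdf_integrableOn _)]
  ring

lemma Phi_hasDerivAt (x : ℝ) : HasDerivAt Phi (stdPdf x) x := by
  have h : HasDerivAt (fun y => ∫ t in (0:ℝ)..y, stdPdf t) (stdPdf x) x :=
    intervalIntegral.integral_hasDerivAt_right
      ((stdPdf_continuous.intervalIntegrable _ _))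
      (stdPdf_continuous.stronglyMeasurableAtFilter _ _)
      stdPdf_continuous.continuousAt
  have := h.const_add (Phi 0)
  rw [show Phi = fun y => Phi 0 + ∫ t in (0:ℝ)..y, stdPdf t from funext Phi_eq]
  exact this

lemma Phi_continuous : Continuous Phi :=
  continuous_iff_continuousAt.2 fun x => (Phi_hasDerivAt x).continuousAt

/-- The level sets in `t` of the two-sided error profile are countable (when `b, c > 0`). -/
lemma level_countable {b c v : ℝ} (hb : 0 < b) (hc : 0 < c) :
    Set.Countable {t : ℝ | (1/2) * Phi ((b - t)/c) + (1/2) * Phi ((t + b)/c) = v} := by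
  set g : ℝ → ℝ := fun t => (1/2) * Phi ((b - t)/c) + (1/2) * Phi ((t + b)/c) with hg
  have hderiv : ∀ t : ℝ, HasDerivAt g
      ((1/2) * (gaussianPDFReal 0 1 ((b - t)/c) * (-1/c))
        + (1/2) * (gaussianPDFReal 0 1 ((t + b)/c) * (1/c))) t := by
    intro t
    have h1 : HasDerivAt (fun t : ℝ => (b - t)/c) (-1/c) t := by
      simpa using ((hasDerivAt_id t).const_sub b).div_const c
    have h2 : HasDerivAt (fun t : ℝ => (t + b)/c) (1/c) t := by
      simpa using ((hasDerivAt_id t).add_const b).div_const c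
    exact (((Phi_hasDerivAt _).comp t h1).const_mul _).add
      (((Phi_hasDerivAt _).comp t h2).const_mul _)
  have hanti : StrictAntiOn g (Set.Ici 0) := by
    apply strictAntiOn_of_deriv_neg (convex_Ici 0)
    · exact Continuous.continuousOn
        ((continuous_const.mul (Phi_continuous.comp ((continuous_const.sub continuous_id).div_const c))).add
          (continuous_const.mul (Phi_continuous.comp ((continuous_id.add continuous_const).div_const c))))
    · intro t ht
      rw [interior_Ici] at ht
      rw [(hderiv t).deriv]
      have hlt : gaussianPDFReal 0 1 ((t + b)/c) < gaussianPDFReal 0 1 ((b - t)/c) := by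
        apply stdPdf_lt
        rw [div_pow, div_pow, div_lt_div_iff_of_pos_right (by positivity : (0:ℝ) < c ^ 2)]
        nlinarith [ht.out, hb]
      have h3 : gaussianPDFReal 0 1 ((t + b)/c) * (1/c)
          < gaussianPDFReal 0 1 ((b - t)/c) * (1/c) :=
        mul_lt_mul_of_pos_right hlt (by positivity)
      have h4 : (1:ℝ)/2 * (gaussianPDFReal 0 1 ((b - t)/c) * (-1/c))
          = -((1:ℝ)/2 * (gaussianPDFReal 0 1 ((b - t)/c) * (1/c))) := by ring
      rw [h4]
      linarith
  have heven : ∀ t : ℝ, g (-t) = g t := by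
    intro t
    simp only [hg]
    rw [add_comm]
    ring_nf
  have hsub : Set.Subsingleton ({t : ℝ | g t = v} ∩ Set.Ici 0) := by
    intro t1 h1 t2 h2
    exact hanti.injOn h1.2 h2.2 (h1.1.trans h2.1.symm)
  have : {t : ℝ | g t = v} ⊆ ({t : ℝ | g t = v} ∩ Set.Ici 0) ∪
      (Neg.neg '' ({t : ℝ | g t = v} ∩ Set.Ici 0)) := by
    intro t ht
    rcases le_total 0 t with h | h
    · exact Or.inl ⟨ht, h⟩
    · refine Or.inr ⟨-t, ⟨?_, ?_⟩, neg_neg t⟩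
      · show g (-t) = v
        rw [heven t]; exact ht
      · simp only [Set.mem_Ici]; linarith
  exact Set.Countable.mono this ((hsub.countable).union (hsub.countable.image _))

section vec
variable {d : ℕ}

lemma eucNorm_nonneg (x : Fin d → ℝ) : 0 ≤ eucNorm x := Real.sqrt_nonneg _

lemma eucNorm_pos {x : Fin d → ℝ} (hx : x ≠ 0) : 0 < eucNorm x := by
  obtain ⟨i, hi⟩ : ∃ i, x i ≠ 0 := by
    by_contra h
    push_neg at h
    exact hx (funext h)
  apply Real.sqrt_pos.2
  have h1 : (0:ℝ) < x i ^ 2 := by positivity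
  have h2 : ∀ j ∈ Finset.univ, (0:ℝ) ≤ x j ^ 2 := fun j _ => sq_nonneg _
  calc (0:ℝ) < x i ^ 2 := h1
    _ ≤ ∑ j, x j ^ 2 := Finset.single_le_sum h2 (Finset.mem_univ i)

lemma eucNorm_smul (c : ℝ) (x : Fin d → ℝ) : eucNorm (c • x) = |c| * eucNorm x := by
  unfold eucNorm
  have : ∑ i, (c • x) i ^ 2 = c ^ 2 * ∑ i, x i ^ 2 := by
    rw [Finset.mul_sum]
    congr 1; ext i
    simp [mul_pow]
  rw [this, Real.sqrt_mul (sq_nonneg c), Real.sqrt_sq_eq_abs]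

lemma dotp_smul_right (p : Fin d → ℝ) (c : ℝ) (x : Fin d → ℝ) :
    dotp p (c • x) = c * dotp p x := by
  unfold dotp
  rw [Finset.mul_sum]
  congr 1; ext i; simp; ring

lemma dotp_smul_left (c : ℝ) (p x : Fin d → ℝ) : dotp (c • p) x = c * dotp p x := by
  unfold dotp
  rw [Finset.mul_sum]
  congr 1; ext i; simp; ring

/-- Positive scale invariance of the reducible error. -/
lemma redErrMD_smul (μ : Fin d → ℝ) (σ : ℝ) (p : Fin d → ℝ) (t : ℝ) {c : ℝ} (hc : 0 < c) :
    redErrMD d μ σ (c • p) (c * t) = redErrMD d μ σ p t := by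
  unfold redErrMD
  rw [dotp_smul_left, eucNorm_smul, abs_mul, abs_of_pos hc]
  have h1 : (c * |dotp p μ| - c * t) / (σ * (c * eucNorm p))
      = (|dotp p μ| - t) / (σ * eucNorm p) := by
    rw [← mul_sub, show σ * (c * eucNorm p) = c * (σ * eucNorm p) by ring,
      mul_div_mul_left _ _ (ne_of_gt hc)]
  have h2 : (c * t + c * |dotp p μ|) / (σ * (c * eucNorm p))
      = (t + |dotp p μ|) / (σ * eucNorm p) := by
    rw [← mul_add, show σ * (c * eucNorm p) = c * (σ * eucNorm p) by ring,
      mul_div_mul_left _ _ (ne_of_gt hc)]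
  rw [h1, h2]

lemma continuous_eucNorm : Continuous (eucNorm (d := d)) := by
  apply Real.continuous_sqrt.comp
  fun_prop

lemma continuous_dotp_left (x : Fin d → ℝ) : Continuous (fun p : Fin d → ℝ => dotp p x) := by
  unfold dotp
  fun_prop

lemma measurable_errFun (d : ℕ) (μ : Fin d → ℝ) (σ : ℝ) :
    Measurable (fun q : (Fin d → ℝ) × ℝ => redErrMD d μ σ q.1 q.2) := by
  unfold redErrMD
  have h1 : Measurable (fun q : (Fin d → ℝ) × ℝ => |dotp q.1 μ|) :=
    (((continuous_dotp_left μ).comp continuous_fst).abs).measurable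
  have h2 : Measurable (fun q : (Fin d → ℝ) × ℝ => σ * eucNorm q.1) :=
    (continuous_const.mul (continuous_eucNorm.comp continuous_fst)).measurable
  have h3 : Measurable (fun q : (Fin d → ℝ) × ℝ => q.2) := measurable_snd
  exact ((measurable_const.sub
      ((Phi_continuous.measurable.comp ((h1.sub h3).div h2)).const_mul _)).sub
      ((Phi_continuous.measurable.comp ((h3.add h1).div h2)).const_mul _))

end vec

lemma measurable_pt (d : ℕ) :
    Measurable (fun y : EuclideanSpace ℝ (Fin (d+1)) => ((pPart d y, tPart d y) : (Fin d → ℝ) × ℝ)) := by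
  apply Measurable.prodMk
  · apply measurable_pi_iff.2
    intro i
    exact (PiLp.continuous_apply 2 (fun _ : Fin (d+1) => ℝ) (i.castSucc : Fin (d+1))).measurable
  · exact (PiLp.continuous_apply 2 (fun _ : Fin (d+1) => ℝ) (Fin.last d)).measurable

/-- The dot product with `u` as a linear map. -/
noncomputable def dotLin {d : ℕ} (u : Fin d → ℝ) : (Fin d → ℝ) →ₗ[ℝ] ℝ where
  toFun := fun p => dotp p u
  map_add' := by
    intro p q
    show (∑ i, (p + q) i * u i) = (∑ i, p i * u i) + ∑ i, q i * u i
    rw [← Finset.sum_add_distrib]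
    exact Finset.sum_congr rfl fun i _ => by simp [add_mul]
  map_smul' := by
    intro c p
    simp only [RingHom.id_apply, smul_eq_mul]
    exact dotp_smul_left c p u

@[simp] lemma dotLin_apply {d : ℕ} (u p : Fin d → ℝ) : dotLin u p = dotp p u := rfl

/-- The global level set has Lebesgue measure zero. -/
lemma volume_level_zero (d : ℕ) (σ γ s : ℝ) (hσ : 0 < σ) (hs : 0 < s)
    (u : Fin d → ℝ) (hu : eucNorm u = 1) :
    volume {y : EuclideanSpace ℝ (Fin (d+1)) |
      pPart d y ≠ 0 ∧ redErrMD d (s • u) σ (pPart d y) (tPart d y) = γ} = 0 := by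
  classical
  -- the set in product coordinates
  set S : Set ((Fin d → ℝ) × ℝ) :=
    {q | q.1 ≠ 0 ∧ redErrMD d (s • u) σ q.1 q.2 = γ} with hS
  have hSm : MeasurableSet S := by
    apply MeasurableSet.inter
    · exact measurable_fst (MeasurableSet.singleton 0).compl
    · exact measurable_errFun d (s • u) σ (MeasurableSet.singleton γ)
  -- the preimage description
  have hset : {y : EuclideanSpace ℝ (Fin (d+1)) |
      pPart d y ≠ 0 ∧ redErrMD d (s • u) σ (pPart d y) (tPart d y) = γ}
      = (fun y : EuclideanSpace ℝ (Fin (d+1)) => (pPart d y, tPart d y)) ⁻¹' S := rfl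
  rw [hset]
  -- measure preserving chain
  have mp1 := EuclideanSpace.volume_preserving_symm_measurableEquiv_toLp (Fin (d+1))
  have mp2 := measurePreserving_piFinSuccAbove (fun _ : Fin (d+1) => (volume : Measure ℝ)) (Fin.last d)
  have mp3 := Measure.measurePreserving_swap (μ := (volume : Measure ℝ))
    (ν := (volume : Measure (Fin d → ℝ)))
  have hpi : (Measure.pi fun _ : Fin (d+1) => (volume : Measure ℝ)) = volume :=
    (volume_pi).symm
  have hpi' : (Measure.pi fun _ : Fin d => (volume : Measure ℝ)) = volume :=
    (volume_pi).symm
  rw [hpi, hpi'] at mp2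
  -- identify the coordinate map with the composition of measure preserving maps
  have hF : (fun y : EuclideanSpace ℝ (Fin (d+1)) => ((pPart d y, tPart d y) : (Fin d → ℝ) × ℝ))
      = Prod.swap ∘ (MeasurableEquiv.piFinSuccAbove (fun _ : Fin (d+1) => ℝ) (Fin.last d))
        ∘ (MeasurableEquiv.toLp 2 (Fin (d+1) → ℝ)).symm := by
    funext y
    have h1 : ∀ j : Fin d, (Fin.last d).succAbove j = j.castSucc := fun j =>
      Fin.succAbove_last_apply j
    ext i
    · show pPart d y i = _
      simp only [pPart, MeasurableEquiv.piFinSuccAbove, Fin.insertNthEquiv,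
        MeasurableEquiv.toLp, Function.comp_apply, Prod.fst_swap,
        MeasurableEquiv.coe_mk, Equiv.coe_fn_symm_mk, Fin.removeNth, h1 i]
      rfl
    · rfl
  have mpF : MeasurePreserving
      (fun y : EuclideanSpace ℝ (Fin (d+1)) => ((pPart d y, tPart d y) : (Fin d → ℝ) × ℝ))
      volume ((volume : Measure (Fin d → ℝ)).prod (volume : Measure ℝ)) := by
    rw [hF]
    exact (mp3.comp mp2).comp mp1
  rw [mpF.measure_preimage hSm.nullMeasurableSet]
  rw [Measure.measure_prod_null hSm]
  -- the hyperplane `dotp p u = 0` is null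
  have hker : volume {p : Fin d → ℝ | dotp p u = 0} = 0 := by
    have hsum : (∑ i, u i ^ 2) = 1 := by
      have h0 : (0:ℝ) ≤ ∑ i, u i ^ 2 := by positivity
      have := Real.sq_sqrt h0
      unfold eucNorm at hu
      rw [hu] at this
      linarith
    have hne : LinearMap.ker (dotLin u) ≠ ⊤ := by
      intro h
      have hmem : u ∈ LinearMap.ker (dotLin u) := h ▸ Submodule.mem_top
      rw [LinearMap.mem_ker, dotLin_apply] at hmem
      have : dotp u u = 1 := by
        unfold dotp
        rw [← hsum]
        exact Finset.sum_congr rfl fun i _ => (sq (u i)).symm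
      rw [hmem] at this
      norm_num at this
    have hset2 : {p : Fin d → ℝ | dotp p u = 0}
        = (LinearMap.ker (dotLin u) : Set (Fin d → ℝ)) := by
      ext p
      simp [LinearMap.mem_ker]
    rw [hset2]
    exact Measure.addHaar_submodule _ _ hne
  have hae : ∀ᵐ p : Fin d → ℝ, dotp p u ≠ 0 := by
    rw [ae_iff]
    simpa using hker
  filter_upwards [hae] with p hp
  show volume (Prod.mk p ⁻¹' S) = 0
  have hp0 : p ≠ 0 := by
    intro h
    apply hp
    rw [h]
    unfold dotp
    simp
  have hb : 0 < |dotp p (s • u)| := by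
    rw [dotp_smul_right]
    exact abs_pos.2 (mul_ne_zero (ne_of_gt hs) hp)
  have hc : 0 < σ * eucNorm p := mul_pos hσ (eucNorm_pos hp0)
  apply measure_mono_null ?_
    ((level_countable (v := Phi (eucNorm (s • u) / σ) - γ) hb hc).measure_zero volume)
  intro t ht
  obtain ⟨-, he⟩ := ht
  unfold redErrMD at he
  show _ = _
  linarith


open Pointwise in
lemma pPart_smul (d : ℕ) (c : ℝ) (y : EuclideanSpace ℝ (Fin (d+1))) :
    pPart d (c • y) = c • pPart d y := rfl

lemma tPart_smul (d : ℕ) (c : ℝ) (y : EuclideanSpace ℝ (Fin (d+1))) :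
    tPart d (c • y) = c * tPart d y := rfl

lemma measurableSet_sphereSet (d : ℕ) (μ : Fin d → ℝ) (σ : ℝ) (B : Set ℝ)
    (hB : MeasurableSet B) :
    MeasurableSet {x : Metric.sphere (0 : EuclideanSpace ℝ (Fin (d + 1))) 1 |
      pPart d x.val ≠ 0 ∧ redErrMD d μ σ (pPart d x.val) (tPart d x.val) ∈ B} := by
  have hZ : MeasurableSet {y : EuclideanSpace ℝ (Fin (d+1)) |
      pPart d y ≠ 0 ∧ redErrMD d μ σ (pPart d y) (tPart d y) ∈ B} := by
    apply MeasurableSet.inter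
    · exact (measurable_fst.comp (measurable_pt d)) (MeasurableSet.singleton 0).compl
    · exact ((measurable_errFun d μ σ).comp (measurable_pt d)) hB
  exact measurable_subtype_coe hZ

open Pointwise in
lemma sphere_level_zero (d : ℕ) (σ γ s : ℝ) (hσ : 0 < σ) (hs : 0 < s)
    (u : Fin d → ℝ) (hu : eucNorm u = 1) :
    sphereMeasure d {x : Metric.sphere (0 : EuclideanSpace ℝ (Fin (d + 1))) 1 |
      pPart d x.val ≠ 0 ∧ redErrMD d (s • u) σ (pPart d x.val) (tPart d x.val) = γ} = 0 := by
  have hN : MeasurableSet {x : Metric.sphere (0 : EuclideanSpace ℝ (Fin (d + 1))) 1 |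
      pPart d x.val ≠ 0 ∧ redErrMD d (s • u) σ (pPart d x.val) (tPart d x.val) = γ} :=
    measurableSet_sphereSet d (s • u) σ {γ} (measurableSet_singleton γ)
  rw [sphereMeasure, Measure.toSphere_apply' _ hN]
  rw [show volume (Set.Ioo (0:ℝ) 1 • (Subtype.val '' {x : Metric.sphere (0 : EuclideanSpace ℝ (Fin (d + 1))) 1 |
      pPart d x.val ≠ 0 ∧ redErrMD d (s • u) σ (pPart d x.val) (tPart d x.val) = γ})) = 0
    from ?_, mul_zero]
  apply measure_mono_null ?_ (volume_level_zero d σ γ s hσ hs u hu)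
  rintro z hz
  rw [Set.mem_smul] at hz
  obtain ⟨c, hc, y, hy, rfl⟩ := hz
  obtain ⟨x, hx, rfl⟩ := hy
  obtain ⟨hx1, hx2⟩ := hx
  have hc0 : 0 < c := hc.1
  constructor
  · rw [pPart_smul]
    exact smul_ne_zero (ne_of_gt hc0) hx1
  · rw [pPart_smul, tPart_smul, redErrMD_smul _ _ _ _ hc0]
    exact hx2

/-- Continuity of the error along the ray, for fixed `(p, t)`. -/
lemma continuous_err {d : ℕ} (σ : ℝ) (u p : Fin d → ℝ) (t : ℝ) :
    Continuous (fun s : ℝ => redErrMD d (s • u) σ p t) := by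
  have h1 : (fun s : ℝ => redErrMD d (s • u) σ p t)
      = fun s : ℝ => Phi ((|s| * eucNorm u) / σ)
        - (1 / 2) * Phi ((|s * dotp p u| - t) / (σ * eucNorm p))
        - (1 / 2) * Phi ((t + |s * dotp p u|) / (σ * eucNorm p)) := by
    funext s
    rw [redErrMD, eucNorm_smul, dotp_smul_right]
  rw [h1]
  have habs : Continuous (fun s : ℝ => |s| : ℝ → ℝ) := continuous_abs
  apply Continuous.sub
  apply Continuous.sub
  · exact Phi_continuous.comp ((habs.mul continuous_const).div_const σ)
  · exact continuous_const.mul (Phi_continuous.comp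
      ((((continuous_id.mul continuous_const).abs).sub continuous_const).div_const _))
  · exact continuous_const.mul (Phi_continuous.comp
      ((continuous_const.add ((continuous_id.mul continuous_const).abs)).div_const _))

/-- Along a ray `μ = s·u` with `u` a unit vector, the multidimensional
Rashomon ratio `s ↦ R(s·u)` is continuous on `(0, ∞)`. -/
theorem rashRatioMD_continuousOn
    (d : ℕ) (hd : 1 ≤ d) (σ γ : ℝ) (hσ : 0 < σ) (hγ : 0 < γ)
    (u : Fin d → ℝ) (hu : eucNorm u = 1) :
    ContinuousOn (fun s : ℝ => rashRatioMD d σ γ (s • u)) (Set.Ioi (0 : ℝ)) := by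
  haveI : IsFiniteMeasure (sphereMeasure d) := by
    unfold sphereMeasure; infer_instance
  set ν := sphereMeasure d with hν
  set A : ℝ → Set (Metric.sphere (0 : EuclideanSpace ℝ (Fin (d + 1))) 1) :=
    fun s => {x | pPart d x.val ≠ 0 ∧
      redErrMD d (s • u) σ (pPart d x.val) (tPart d x.val) ≤ γ} with hA
  have hAm : ∀ s : ℝ, MeasurableSet (A s) := fun s =>
    measurableSet_sphereSet d (s • u) σ (Set.Iic γ) measurableSet_Iic
  have key : ContinuousOn (fun s : ℝ => (ν (A s)).toReal) (Set.Ioi 0) := by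
    intro s₀ hs₀
    rw [Set.mem_Ioi] at hs₀
    unfold ContinuousWithinAt
    have hrepr : ∀ s : ℝ, (ν (A s)).toReal
        = ∫ x, (A s).indicator (fun _ => (1:ℝ)) x ∂ν := fun s =>
      (integral_indicator_one (hAm s)).symm
    simp_rw [hrepr]
    apply tendsto_integral_filter_of_dominated_convergence (fun _ => (1:ℝ))
    · exact Filter.Eventually.of_forall fun s =>
        ((measurable_const.indicator (hAm s)).aestronglyMeasurable)
    · refine Filter.Eventually.of_forall fun s => ae_of_all _ fun x => ?_
      by_cases hx : x ∈ A s <;> simp [Set.indicator_apply, hx]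
    · exact integrable_const 1
    · -- a.e. convergence of indicators
      have hnull := sphere_level_zero d σ γ s₀ hσ hs₀ u hu
      have hae : ∀ᵐ x ∂ν, ¬(pPart d x.val ≠ 0 ∧
          redErrMD d (s₀ • u) σ (pPart d x.val) (tPart d x.val) = γ) := by
        rw [ae_iff]
        simpa using hnull
      filter_upwards [hae] with x hx
      by_cases hp : pPart d x.val = 0
      · have hzero : ∀ s : ℝ, (A s).indicator (fun _ => (1:ℝ)) x = 0 := fun s =>
          Set.indicator_of_notMem (fun hmem => hmem.1 hp) _
        simp_rw [hzero]
        exact tendsto_const_nhds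
      · have hne : redErrMD d (s₀ • u) σ (pPart d x.val) (tPart d x.val) ≠ γ := by
          intro h
          exact hx ⟨hp, h⟩
        have hcont := (continuous_err σ u (pPart d x.val) (tPart d x.val)).continuousAt
          (x := s₀)
        rcases lt_or_gt_of_ne hne with hlt | hgt
        · have hev : ∀ᶠ s in nhds s₀,
              redErrMD d (s • u) σ (pPart d x.val) (tPart d x.val) < γ :=
            hcont.eventually_lt_const hlt
          have hev1 : ∀ᶠ s in nhdsWithin s₀ (Set.Ioi 0),
              (A s).indicator (fun _ => (1:ℝ)) x = 1 := by
            apply Filter.Eventually.filter_mono nhdsWithin_le_nhds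
            filter_upwards [hev] with s hsx
            exact Set.indicator_of_mem (show x ∈ A s from ⟨hp, le_of_lt hsx⟩) _
          have h0 : (A s₀).indicator (fun _ => (1:ℝ)) x = 1 :=
            Set.indicator_of_mem (show x ∈ A s₀ from ⟨hp, le_of_lt hlt⟩) _
          rw [h0]
          exact Filter.Tendsto.congr' (hev1.mono fun s h => h.symm) tendsto_const_nhds
        · have hev : ∀ᶠ s in nhds s₀,
              γ < redErrMD d (s • u) σ (pPart d x.val) (tPart d x.val) :=
            hcont.eventually_const_lt hgt
          have hev1 : ∀ᶠ s in nhdsWithin s₀ (Set.Ioi 0),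
              (A s).indicator (fun _ => (1:ℝ)) x = 0 := by
            apply Filter.Eventually.filter_mono nhdsWithin_le_nhds
            filter_upwards [hev] with s hsx
            exact Set.indicator_of_notMem (fun hmem => absurd hmem.2 (not_le.2 hsx)) _
          have h0 : (A s₀).indicator (fun _ => (1:ℝ)) x = 0 :=
            Set.indicator_of_notMem (fun hmem => absurd hmem.2 (not_le.2 hgt)) _
          rw [h0]
          exact Filter.Tendsto.congr' (hev1.mono fun s h => h.symm) tendsto_const_nhds
  have : (fun s : ℝ => rashRatioMD d σ γ (s • u))
      = fun s : ℝ => (ν (A s)).toReal / (ν Set.univ).toReal := rfl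
  rw [this]
  exact key.div_const _
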